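/- Incremental cyclo-dissipativity of the exponentially-scaled averaging reactive power (E-ARP) controller (Theorem 1, item 4): let L_Q ∈ ℝ^{n×n} be symmetric positive semidefinite (the Laplacian of an undirected connected communication graph), let (θ̄, ω̄, V̄) satisfy V̄ ∈ ℝⁿ_{>0} and ω̄ = ω⁰·1 for some ω⁰ ∈ ℝ, put P̄ := P(θ̄,V̄), Q̄ := Q(θ̄,V̄), let ū_P ∈ ℝⁿ satisfy 0 = −(ω̄ − ω*) − K_P(P̄ − P*) + ū_P, and set ū_Q := K_Q L_Q K_Q Q̄. Then for every θ ∈ ℝⁿ, ω ∈ ℝⁿ, V ∈ ℝⁿ_{>0} and u_P, u_Q ∈ ℝⁿ, defining g := [V]⁻¹ (Q(θ,V) − Q̄), the following identity holds: (P(θ,V) − P̄)ᵀ ω + (ω − ω̄)ᵀ K_P⁻¹ (−(ω − ω*) − K_P(P(θ,V) − P*) + u_P) + gᵀ (−[V] K_Q L_Q K_Q Q(θ,V) + [V] u_Q) = −(ω − ω̄)ᵀ K_P⁻¹ (ω − ω̄) + (ω − ω̄)ᵀ K_P⁻¹ (u_P − ū_P) − gᵀ [V] K_Q L_Q K_Q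 [V] g + gᵀ [V] (u_Q − ū_Q). -/
import Mathlib


open Real Finset Matrix

/-- `B_ii = b̂_i + ∑_{j ≠ i} B_ij`. -/
noncomputable def Bdiag (n : ℕ) (B : Fin n → Fin n → ℝ) (bhat : Fin n → ℝ) (i : Fin n) : ℝ :=
  bhat i + ∑ j ∈ Finset.univ.erase i, B i j

/-- Active power `P_i(θ,V) = ∑_{j ≠ i} B_ij V_i V_j sin(θ_i − θ_j)`. -/
noncomputable def activeP (n : ℕ) (B : Fin n → Fin n → ℝ) (θ V : Fin n → ℝ) (i : Fin n) : ℝ :=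
  ∑ j ∈ Finset.univ.erase i, B i j * V i * V j * Real.sin (θ i - θ j)

/-- Reactive power `Q_i(θ,V) = B_ii V_i² − ∑_{j ≠ i} B_ij V_i V_j cos(θ_i − θ_j)`. -/
noncomputable def reactiveQ (n : ℕ) (B : Fin n → Fin n → ℝ) (bhat : Fin n → ℝ)
    (θ V : Fin n → ℝ) (i : Fin n) : ℝ :=
  Bdiag n B bhat i * V i ^ 2
    - ∑ j ∈ Finset.univ.erase i, B i j * V i * V j * Real.cos (θ i - θ j)

lemma sum_activeP_eq_zero (n : ℕ) (B : Fin n → Fin n → ℝ)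
    (hBsymm : ∀ i j, B i j = B j i) (θ V : Fin n → ℝ) :
    ∑ i, activeP n B θ V i = 0 := by
  have h : ∀ i, activeP n B θ V i
      = ∑ j, B i j * V i * V j * Real.sin (θ i - θ j) := by
    intro i
    rw [activeP, Finset.sum_erase]
    simp
  simp only [h]
  have h2 : (∑ i : Fin n, ∑ j : Fin n, B i j * V i * V j * Real.sin (θ i - θ j))
      + (∑ i : Fin n, ∑ j : Fin n, B i j * V i * V j * Real.sin (θ i - θ j)) = 0 := by
    nth_rewrite 2 [Finset.sum_comm]
    rw [← Finset.sum_add_distrib]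
    have : ∀ i : Fin n, (∑ j : Fin n, B i j * V i * V j * Real.sin (θ i - θ j))
        + (∑ j : Fin n, B j i * V j * V i * Real.sin (θ j - θ i)) = 0 := by
      intro i
      rw [← Finset.sum_add_distrib]
      apply Finset.sum_eq_zero
      intro j _
      have hsin : Real.sin (θ i - θ j) = -Real.sin (θ j - θ i) := by
        rw [← Real.sin_neg]; ring_nf
      rw [hBsymm i j, hsin]; ring
    rw [Finset.sum_congr rfl (fun i _ => this i), Finset.sum_const, smul_zero]
  linarith

/-- Incremental cyclo-dissipativity of the exponentially-scaled averaging
reactive power (E-ARP) controller (Theorem 1, item 4); the voltage time constants are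
taken equal to the identity. -/
theorem earp_incremental_cyclo_dissipativity
    (n : ℕ) (G : SimpleGraph (Fin n)) [DecidableRel G.Adj]
    (hconn : G.Connected)
    (B : Fin n → Fin n → ℝ)
    (hBsymm : ∀ i j, B i j = B j i)
    (hBpos : ∀ i j, G.Adj i j → 0 < B i j)
    (hBzero : ∀ i j, ¬ G.Adj i j → B i j = 0)
    (bhat : Fin n → ℝ) (hbhat : ∀ i, 0 ≤ bhat i)
    (kP TP kQ : Fin n → ℝ)
    (hkP : ∀ i, 0 < kP i) (hTP : ∀ i, 0 < TP i) (hkQ : ∀ i, 0 < kQ i)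
    (LQ : Matrix (Fin n) (Fin n) ℝ) (hLQ : LQ.PosSemidef)
    (ωstar Pstar : Fin n → ℝ)
    (θbar ωbar Vbar : Fin n → ℝ) (ω0 : ℝ)
    (hVbar : ∀ i, 0 < Vbar i)
    (hωbar : ωbar = fun _ => ω0)
    (uPbar uQbar : Fin n → ℝ)
    (huPbar : ∀ i, 0 = -(ωbar i - ωstar i)
        - kP i * (activeP n B θbar Vbar i - Pstar i) + uPbar i)
    (huQbar : uQbar
        = fun i => kQ i * (LQ *ᵥ fun j => kQ j * reactiveQ n B bhat θbar Vbar j) i)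
    (θ ω V uP uQ : Fin n → ℝ) (hV : ∀ i, 0 < V i)
    (g : Fin n → ℝ)
    (hg : ∀ i, g i = (reactiveQ n B bhat θ V i - reactiveQ n B bhat θbar Vbar i) / V i) :
    ∑ i, (activeP n B θ V i - activeP n B θbar Vbar i) * ω i
      + ∑ i, (ω i - ωbar i) * (kP i)⁻¹
          * (-(ω i - ωstar i) - kP i * (activeP n B θ V i - Pstar i) + uP i)
      + ∑ i, g i * (-(V i * (kQ i * (LQ *ᵥ fun j => kQ j * reactiveQ n B bhat θ V j) i))
          + V i * uQ i)
    =
    -∑ i, (ω i - ωbar i) * (kP i)⁻¹ * (ω i - ωbar i)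
      + ∑ i, (ω i - ωbar i) * (kP i)⁻¹ * (uP i - uPbar i)
      - ∑ i, (V i * (kQ i * g i)) * (LQ *ᵥ fun j => kQ j * (V j * g j)) i
      + ∑ i, g i * (V i * (uQ i - uQbar i)) := by
  have hVg : ∀ i, V i * g i
      = reactiveQ n B bhat θ V i - reactiveQ n B bhat θbar Vbar i := by
    intro i
    rw [hg i, mul_div_cancel₀ _ (hV i).ne']
  have hfun : (fun j => kQ j * (V j * g j))
      = fun j => kQ j * (reactiveQ n B bhat θ V j - reactiveQ n B bhat θbar Vbar j) := by
    funext j; rw [hVg j]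
  have hlin : ∀ i, (LQ *ᵥ fun j => kQ j * reactiveQ n B bhat θ V j) i
      = (LQ *ᵥ fun j => kQ j * (V j * g j)) i
        + (LQ *ᵥ fun j => kQ j * reactiveQ n B bhat θbar Vbar j) i := by
    intro i
    rw [hfun]
    simp only [Matrix.mulVec, dotProduct]
    rw [← Finset.sum_add_distrib]
    apply Finset.sum_congr rfl
    intro j _
    ring
  have huP' : ∀ i, uPbar i = (ω0 - ωstar i)
      + kP i * (activeP n B θbar Vbar i - Pstar i) := by
    intro i
    have h := huPbar i
    rw [hωbar] at h
    linarith
  have hP1 := sum_activeP_eq_zero n B hBsymm θ V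
  have hP2 := sum_activeP_eq_zero n B hBsymm θbar Vbar
  have h0 : ∑ i, (activeP n B θ V i - activeP n B θbar Vbar i) * ω0 = 0 := by
    rw [← Finset.sum_mul, Finset.sum_sub_distrib, hP1, hP2]
    ring
  subst hωbar huQbar
  have key : ∀ i : Fin n,
      (activeP n B θ V i - activeP n B θbar Vbar i) * ω i
      + (ω i - ω0) * (kP i)⁻¹
          * (-(ω i - ωstar i) - kP i * (activeP n B θ V i - Pstar i) + uP i)
      + g i * (-(V i * (kQ i * (LQ *ᵥ fun j => kQ j * reactiveQ n B bhat θ V j) i))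
          + V i * uQ i)
      =
      (-((ω i - ω0) * (kP i)⁻¹ * (ω i - ω0))
      + (ω i - ω0) * (kP i)⁻¹ * (uP i - uPbar i)
      - (V i * (kQ i * g i)) * (LQ *ᵥ fun j => kQ j * (V j * g j)) i
      + g i * (V i * (uQ i - kQ i
          * (LQ *ᵥ fun j => kQ j * reactiveQ n B bhat θbar Vbar j) i)))
      + (activeP n B θ V i - activeP n B θbar Vbar i) * ω0 := by
    intro i
    rw [hlin i, huP' i]
    have hk : kP i ≠ 0 := (hkP i).ne'
    field_simp
    ring
  calc ∑ i, (activeP n B θ V i - activeP n B θbar Vbar i) * ω i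
      + ∑ i, (ω i - ω0) * (kP i)⁻¹
          * (-(ω i - ωstar i) - kP i * (activeP n B θ V i - Pstar i) + uP i)
      + ∑ i, g i * (-(V i * (kQ i * (LQ *ᵥ fun j => kQ j * reactiveQ n B bhat θ V j) i))
          + V i * uQ i)
      = ∑ i, ((activeP n B θ V i - activeP n B θbar Vbar i) * ω i
        + (ω i - ω0) * (kP i)⁻¹
          * (-(ω i - ωstar i) - kP i * (activeP n B θ V i - Pstar i) + uP i)
        + g i * (-(V i * (kQ i * (LQ *ᵥ fun j => kQ j * reactiveQ n B bhat θ V j) i))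
          + V i * uQ i)) := by
        simp [Finset.sum_add_distrib]
    _ = ∑ i, ((-((ω i - ω0) * (kP i)⁻¹ * (ω i - ω0))
        + (ω i - ω0) * (kP i)⁻¹ * (uP i - uPbar i)
        - (V i * (kQ i * g i)) * (LQ *ᵥ fun j => kQ j * (V j * g j)) i
        + g i * (V i * (uQ i - kQ i
            * (LQ *ᵥ fun j => kQ j * reactiveQ n B bhat θbar Vbar j) i)))
        + (activeP n B θ V i - activeP n B θbar Vbar i) * ω0) := by
        exact Finset.sum_congr rfl fun i _ => key i
    _ = (∑ i, (-((ω i - ω0) * (kP i)⁻¹ * (ω i - ω0))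
        + (ω i - ω0) * (kP i)⁻¹ * (uP i - uPbar i)
        - (V i * (kQ i * g i)) * (LQ *ᵥ fun j => kQ j * (V j * g j)) i
        + g i * (V i * (uQ i - kQ i
            * (LQ *ᵥ fun j => kQ j * reactiveQ n B bhat θbar Vbar j) i))))
        + ∑ i, (activeP n B θ V i - activeP n B θbar Vbar i) * ω0 := by
        rw [Finset.sum_add_distrib]
    _ = -∑ i, (ω i - ω0) * (kP i)⁻¹ * (ω i - ω0)
      + ∑ i, (ω i - ω0) * (kP i)⁻¹ * (uP i - uPbar i)
      - ∑ i, (V i * (kQ i * g i)) * (LQ *ᵥ fun j => kQ j * (V j * g j)) i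
      + ∑ i, g i * (V i * (uQ i - kQ i
          * (LQ *ᵥ fun j => kQ j * reactiveQ n B bhat θbar Vbar j) i)) := by
        rw [h0, add_zero]
        simp [Finset.sum_add_distrib, Finset.sum_sub_distrib]
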